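/- Assume QC = ρωC with ρ > 0, |ω| = 1 (so C is an eigenvector of Q), and hypothesis (rsr). Then sup_{x∈[0,1]} ‖(ρω)^{−K} S_K(x) − F(x)‖ = O((λ/ρ)^K) as K → ∞, where F is the unique continuous solution of the basic dilation equation with V = C. -/

import Mathlib

open scoped Classical BigOperators
open Filter Asymptotics
open Topology

attribute [local instance] Matrix.linftyOpNormedAddCommGroup Matrix.linftyOpNormedRing

noncomputable section

/-- `A_w = A_{w_1} ⋯ A_{w_K}` for a word `w` of length `K` over the digit alphabet. -/
def wordProd {B d : ℕ} (A : Fin B → Matrix (Fin d) (Fin d) ℂ) {K : ℕ}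
    (w : Fin K → Fin B) : Matrix (Fin d) (Fin d) ℂ :=
  ((List.ofFn w).map A).prod

/-- `(0.w)_B = Σ_{k=1}^K w_k B^{-k}`. -/
def wordVal {B K : ℕ} (w : Fin K → Fin B) : ℝ :=
  ∑ k : Fin K, (w k : ℝ) / (B : ℝ) ^ ((k : ℕ) + 1)

/-- The running sum `S_K(x) = Σ_{|w|=K, (0.w)_B ≤ x} A_w C`. -/
def runSum {B d : ℕ} (A : Fin B → Matrix (Fin d) (Fin d) ℂ) (C : Fin d → ℂ)
    (K : ℕ) (x : ℝ) : Fin d → ℂ :=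
  ∑ w : Fin K → Fin B, if wordVal w ≤ x then (wordProd A w).mulVec C else 0

/-- The basic dilation equation for data `ρ, ω, V`. -/
def DilationEq {B d : ℕ} (A : Fin B → Matrix (Fin d) (Fin d) ℂ) (ρ : ℝ) (ω : ℂ)
    (V : Fin d → ℂ) (Φ : ℝ → Fin d → ℂ) : Prop :=
  Φ 0 = 0 ∧ Φ 1 = V ∧
    ∀ r : Fin B, ∀ x : ℝ, (r : ℝ) / B ≤ x → x < ((r : ℝ) + 1) / B →
      Φ x = ((ρ : ℂ) * ω)⁻¹ •
        ((∑ s ∈ Finset.univ.filter fun s : Fin B => s < r, (A s).mulVec V) +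
          (A r).mulVec (Φ (B * x - r)))

variable {B d : ℕ}

lemma rs_wordVal_nonneg {K : ℕ} (w : Fin K → Fin B) : 0 ≤ wordVal w :=
  Finset.sum_nonneg fun k _ => div_nonneg (Nat.cast_nonneg _) (by positivity)

lemma rs_wordVal_cons (hB : 0 < B) {K : ℕ} (s : Fin B) (w : Fin K → Fin B) :
    wordVal (Fin.cons s w) = ((s : ℝ) + wordVal w) / B := by
  have hB' : (B : ℝ) ≠ 0 := Nat.cast_ne_zero.mpr hB.ne'
  rw [wordVal, Fin.sum_univ_succ]
  simp only [Fin.cons_zero, Fin.cons_succ, Fin.val_succ, Fin.val_zero]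
  rw [add_div, wordVal, Finset.sum_div]
  congr 1
  · norm_num
  · refine Finset.sum_congr rfl fun k _ => ?_
    rw [div_div, ← pow_succ]

lemma rs_wordVal_lt_one (hB : 0 < B) {K : ℕ} (w : Fin K → Fin B) : wordVal w < 1 := by
  induction K with
  | zero => simp [wordVal]
  | succ K ih =>
    have hBR : (0:ℝ) < B := Nat.cast_pos.mpr hB
    rw [← Fin.cons_self_tail w, rs_wordVal_cons hB]
    rw [div_lt_one hBR]
    have h1 : (↑(w 0) : ℝ) + 1 ≤ B := by
      have := (w 0).isLt
      exact_mod_cast this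
    have := ih (Fin.tail w)
    linarith

lemma rs_wordProd_cons {K : ℕ} (A : Fin B → Matrix (Fin d) (Fin d) ℂ)
    (s : Fin B) (w : Fin K → Fin B) :
    wordProd A (Fin.cons s w) = A s * wordProd A w := by
  simp [wordProd, List.ofFn_succ, Fin.cons_succ]

lemma rs_norm_wordProd_mulVec {A : Fin B → Matrix (Fin d) (Fin d) ℂ} {C : Fin d → ℂ}
    {lam : ℝ} (hA : ∀ r, ‖A r‖ ≤ lam) (hlam : 0 ≤ lam) {K : ℕ} (w : Fin K → Fin B) :
    ‖(wordProd A w).mulVec C‖ ≤ lam ^ K * ‖C‖ := by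
  induction K with
  | zero => simp [wordProd, Matrix.one_mulVec]
  | succ K ih =>
    rw [← Fin.cons_self_tail w, rs_wordProd_cons, ← Matrix.mulVec_mulVec]
    calc ‖(A (w 0)).mulVec ((wordProd A (Fin.tail w)).mulVec C)‖
        ≤ ‖A (w 0)‖ * ‖(wordProd A (Fin.tail w)).mulVec C‖ :=
          Matrix.linfty_opNorm_mulVec _ _
      _ ≤ lam * (lam ^ K * ‖C‖) := by
          apply mul_le_mul (hA _) (ih (Fin.tail w)) (norm_nonneg _) hlam
      _ = lam ^ (K+1) * ‖C‖ := by ring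

lemma rs_sum_cons {M : Type*} [AddCommMonoid M] {K : ℕ} (f : (Fin (K+1) → Fin B) → M) :
    ∑ w : Fin (K+1) → Fin B, f w
      = ∑ s : Fin B, ∑ w : Fin K → Fin B, f (Fin.cons s w) := by
  rw [← Equiv.sum_comp (Fin.consEquiv fun _ => Fin B) f, Fintype.sum_prod_type]
  rfl

lemma rs_sum_mulVec (f : Fin B → Matrix (Fin d) (Fin d) ℂ) (v : Fin d → ℂ) :
    (∑ s, f s).mulVec v = ∑ s, (f s).mulVec v :=
  map_sum (AddMonoidHom.mk' (fun M : Matrix (Fin d) (Fin d) ℂ => M.mulVec v)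
    (fun M N => Matrix.add_mulVec M N v)) _ _

lemma rs_mulVec_sum {ι : Type*} (s : Finset ι) (M : Matrix (Fin d) (Fin d) ℂ)
    (v : ι → Fin d → ℂ) : M.mulVec (∑ i ∈ s, v i) = ∑ i ∈ s, M.mulVec (v i) := by
  simp only [← Matrix.mulVecLin_apply]
  exact map_sum (Matrix.mulVecLin M) _ _

lemma rs_runSum_one (hB : 0 < B) (A : Fin B → Matrix (Fin d) (Fin d) ℂ)
    (C : Fin d → ℂ) (K : ℕ) :
    runSum A C K 1 = ∑ w : Fin K → Fin B, (wordProd A w).mulVec C :=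
  Finset.sum_congr rfl fun w _ => if_pos (rs_wordVal_lt_one hB w).le

lemma rs_sum_wordProd (A : Fin B → Matrix (Fin d) (Fin d) ℂ) (C : Fin d → ℂ)
    {μ : ℂ} (hC : (∑ r, A r).mulVec C = μ • C) (K : ℕ) :
    ∑ w : Fin K → Fin B, (wordProd A w).mulVec C = μ ^ K • C := by
  induction K with
  | zero =>
    rw [pow_zero, one_smul]
    rw [Finset.sum_eq_single_of_mem (fun i : Fin 0 => i.elim0) (Finset.mem_univ _)]
    · simp [wordProd, Matrix.one_mulVec]
    · intro w _ hw
      exact absurd (Subsingleton.elim w _) hw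
  | succ K ih =>
    rw [rs_sum_cons]
    have step : ∀ s : Fin B,
        (∑ w : Fin K → Fin B, (wordProd A (Fin.cons s w)).mulVec C)
          = μ ^ K • (A s).mulVec C := by
      intro s
      simp only [rs_wordProd_cons, ← Matrix.mulVec_mulVec]
      rw [← rs_mulVec_sum, ih, Matrix.mulVec_smul]
    simp only [step]
    rw [← Finset.smul_sum, ← rs_sum_mulVec, hC, smul_smul, ← pow_succ]

lemma rs_runSum_succ (hB : 0 < B) (A : Fin B → Matrix (Fin d) (Fin d) ℂ)
    (C : Fin d → ℂ) (K : ℕ) (r : Fin B) {x : ℝ}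
    (hx1 : (r : ℝ) / B ≤ x) (hx2 : x < ((r : ℝ) + 1) / B) :
    runSum A C (K+1) x
      = (∑ s ∈ Finset.univ.filter fun s : Fin B => s < r,
            (A s).mulVec (runSum A C K 1))
        + (A r).mulVec (runSum A C K (B * x - r)) := by
  have hBR : (0:ℝ) < B := Nat.cast_pos.mpr hB
  rw [runSum, rs_sum_cons]
  have key : ∀ s : Fin B,
      (∑ w : Fin K → Fin B,
          if wordVal (Fin.cons s w) ≤ x then (wordProd A (Fin.cons s w)).mulVec C else 0)
        = (if s < r then (A s).mulVec (runSum A C K 1) else 0)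
          + (if s = r then (A r).mulVec (runSum A C K (B * x - r)) else 0) := by
    intro s
    rcases lt_trichotomy s r with hs | hs | hs
    · rw [if_pos hs, if_neg hs.ne, add_zero]
      have hsr : (s : ℝ) + 1 ≤ (r : ℝ) := by exact_mod_cast hs
      have hterm : ∀ w : Fin K → Fin B, wordVal (Fin.cons s w) ≤ x := by
        intro w
        rw [rs_wordVal_cons hB]
        have h2 := rs_wordVal_lt_one hB w
        have h3 : ((s : ℝ) + wordVal w) / B ≤ (r : ℝ) / B := by
          gcongr
          linarith
        exact h3.trans hx1
      rw [Finset.sum_congr rfl fun w _ => if_pos (hterm w), rs_runSum_one hB]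
      simp only [rs_wordProd_cons, ← Matrix.mulVec_mulVec]
      rw [rs_mulVec_sum]
    · subst hs
      rw [if_neg (lt_irrefl s), if_pos rfl, zero_add]
      have hcond : ∀ w : Fin K → Fin B,
          (wordVal (Fin.cons s w) ≤ x ↔ wordVal w ≤ B * x - s) := by
        intro w
        rw [rs_wordVal_cons hB, div_le_iff₀ hBR]
        constructor <;> intro h <;> nlinarith [mul_comm (B:ℝ) x]
      rw [runSum, rs_mulVec_sum]
      refine Finset.sum_congr rfl fun w _ => ?_
      by_cases h : wordVal w ≤ B * x - s
      · rw [if_pos ((hcond w).mpr h), if_pos h, rs_wordProd_cons, ← Matrix.mulVec_mulVec]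
      · rw [if_neg (fun hc => h ((hcond w).mp hc)), if_neg h, Matrix.mulVec_zero]
    · rw [if_neg (asymm hs), if_neg hs.ne', add_zero]
      have hrs : (r : ℝ) + 1 ≤ (s : ℝ) := by exact_mod_cast hs
      have hterm : ∀ w : Fin K → Fin B, ¬ wordVal (Fin.cons s w) ≤ x := by
        intro w hle
        rw [rs_wordVal_cons hB] at hle
        have h0 := rs_wordVal_nonneg w
        have h3 : ((r : ℝ) + 1) / B ≤ ((s : ℝ) + wordVal w) / B :=
          (div_le_div_iff_of_pos_right hBR).mpr (by linarith)
        linarith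
      rw [Finset.sum_congr rfl fun w _ => if_neg (hterm w), Finset.sum_const_zero]
  rw [Finset.sum_congr rfl fun s _ => key s, Finset.sum_add_distrib,
    Finset.sum_ite_eq' Finset.univ r, if_pos (Finset.mem_univ r), Finset.sum_filter]

lemma rs_wordVal_eq_nat (hB : 0 < B) {K : ℕ} (w : Fin K → Fin B) :
    wordVal w * (B:ℝ)^K = ((finFunctionFinEquiv (fun i => w (Fin.rev i)) : ℕ) : ℝ) := by
  have hBR : (0:ℝ) < B := Nat.cast_pos.mpr hB
  rw [finFunctionFinEquiv_apply]
  push_cast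
  rw [wordVal, Finset.sum_mul]
  refine Fintype.sum_equiv Fin.revPerm _ _ (fun k => ?_)
  rw [Fin.revPerm_apply, Fin.rev_rev]
  rw [Fin.val_rev, div_mul_eq_mul_div, div_eq_iff (by positivity), mul_assoc, ← pow_add]
  congr 2
  omega

lemma rs_wordVal_injective (hB : 0 < B) {K : ℕ} :
    Function.Injective (fun w : Fin K → Fin B => wordVal w) := by
  intro w w' h
  simp only at h
  have h2 : ((finFunctionFinEquiv (fun i => w (Fin.rev i)) : ℕ) : ℝ)
      = ((finFunctionFinEquiv (fun i => w' (Fin.rev i)) : ℕ) : ℝ) := by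
    rw [← rs_wordVal_eq_nat hB, ← rs_wordVal_eq_nat hB, h]
  have h4 : (fun i => w (Fin.rev i)) = (fun i => w' (Fin.rev i)) :=
    finFunctionFinEquiv.injective (Fin.val_injective (Nat.cast_injective h2))
  funext k
  have := congrFun h4 (Fin.rev k)
  simpa [Fin.rev_rev] using this

lemma rs_runSum_osc (hB : 0 < B) {A : Fin B → Matrix (Fin d) (Fin d) ℂ} {C : Fin d → ℂ}
    {lam : ℝ} (hA : ∀ r, ‖A r‖ ≤ lam) (hlam : 0 ≤ lam) (K : ℕ) {x y : ℝ}
    (hyx : y ≤ x) (hxy : x ≤ y + ((B:ℝ)^K)⁻¹) :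
    ‖runSum A C K x - runSum A C K y‖ ≤ lam ^ K * ‖C‖ := by
  classical
  have hBR : (0:ℝ) < B := Nat.cast_pos.mpr hB
  have hBK : (0:ℝ) < (B:ℝ)^K := by positivity
  set S : Finset (Fin K → Fin B) :=
    Finset.univ.filter (fun w => y < wordVal w ∧ wordVal w ≤ x) with hS
  have hsplit : runSum A C K x - runSum A C K y
      = ∑ w ∈ S, (wordProd A w).mulVec C := by
    rw [hS, Finset.sum_filter, runSum, runSum, ← Finset.sum_sub_distrib]
    refine Finset.sum_congr rfl fun w _ => ?_
    by_cases h1 : wordVal w ≤ y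
    · rw [if_pos (h1.trans hyx), if_pos h1, sub_self, if_neg (by simp [not_lt.mpr h1])]
    · rw [if_neg h1, sub_zero]
      by_cases h2 : wordVal w ≤ x
      · rw [if_pos h2, if_pos ⟨not_le.mp h1, h2⟩]
      · rw [if_neg h2, if_neg (by simp [h2])]
  have hcard : S.card ≤ 1 := by
    refine Finset.card_le_one.mpr fun a ha b hb => ?_
    rw [hS, Finset.mem_filter] at ha hb
    refine rs_wordVal_injective hB ?_
    have hlt : |wordVal a - wordVal b| < ((B:ℝ)^K)⁻¹ := by
      rw [abs_sub_lt_iff]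
      constructor <;> linarith [ha.2.1, ha.2.2, hb.2.1, hb.2.2]
    have hdist : |wordVal a * (B:ℝ)^K - wordVal b * (B:ℝ)^K| < 1 := by
      rw [← sub_mul, abs_mul, abs_of_pos hBK]
      calc |wordVal a - wordVal b| * (B:ℝ)^K
          < ((B:ℝ)^K)⁻¹ * (B:ℝ)^K := mul_lt_mul_of_pos_right hlt hBK
        _ = 1 := inv_mul_cancel₀ hBK.ne'
    rw [rs_wordVal_eq_nat hB, rs_wordVal_eq_nat hB, abs_lt] at hdist
    set Na := (finFunctionFinEquiv (fun i => a (Fin.rev i)) : ℕ)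
    set Nb := (finFunctionFinEquiv (fun i => b (Fin.rev i)) : ℕ)
    have h1' : Na < Nb + 1 := by exact_mod_cast (by linarith [hdist.1, hdist.2] : (Na:ℝ) < Nb + 1)
    have h2' : Nb < Na + 1 := by exact_mod_cast (by linarith [hdist.1, hdist.2] : (Nb:ℝ) < Na + 1)
    have hNab : Na = Nb := by omega
    have heq : wordVal a * (B:ℝ)^K = wordVal b * (B:ℝ)^K := by
      rw [rs_wordVal_eq_nat hB, rs_wordVal_eq_nat hB]
      exact_mod_cast hNab
    exact mul_right_cancel₀ hBK.ne' heq
  rw [hsplit]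
  calc ‖∑ w ∈ S, (wordProd A w).mulVec C‖
      ≤ ∑ w ∈ S, ‖(wordProd A w).mulVec C‖ := norm_sum_le _ _
    _ ≤ ∑ _w ∈ S, lam ^ K * ‖C‖ :=
        Finset.sum_le_sum fun w _ => rs_norm_wordProd_mulVec hA hlam w
    _ = (S.card : ℝ) * (lam ^ K * ‖C‖) := by rw [Finset.sum_const, nsmul_eq_mul]
    _ ≤ 1 * (lam ^ K * ‖C‖) := by
        apply mul_le_mul_of_nonneg_right _ (by positivity)
        exact_mod_cast hcard
    _ = lam ^ K * ‖C‖ := one_mul _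

lemma rs_runSum_neg (A : Fin B → Matrix (Fin d) (Fin d) ℂ) (C : Fin d → ℂ) (K : ℕ)
    {x : ℝ} (hx : x < 0) : runSum A C K x = 0 :=
  Finset.sum_eq_zero fun w _ =>
    if_neg (by linarith [rs_wordVal_nonneg w] : ¬ wordVal w ≤ x)

set_option maxHeartbeats 2000000 in
/-- if `C` is an eigenvector of `Q` for `ρω` and (rsr) holds, the speed of
convergence of `(ρω)^{-K} S_K` to the dilation solution is `O((λ/ρ)^K)`. -/
theorem runSum_eigenvector_speed (B d : ℕ) (hB : 2 ≤ B) (hd : 1 ≤ d)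
    (A : Fin B → Matrix (Fin d) (Fin d) ℂ) (C : Fin d → ℂ)
    (ρ : ℝ) (hρ : 0 < ρ) (ω : ℂ) (hω : ‖ω‖ = 1)
    (hC : (∑ r, A r).mulVec C = ((ρ : ℂ) * ω) • C)
    -- hypothesis (rsr)
    (lam : ℝ) (hlam : 0 < lam) (hlamρ : lam < ρ) (hA : ∀ r, ‖A r‖ ≤ lam) :
    ∃ F : ℝ → Fin d → ℂ,
      ContinuousOn F (Set.Icc 0 1) ∧ DilationEq A ρ ω C F ∧
      (∀ Ψ : ℝ → Fin d → ℂ, ContinuousOn Ψ (Set.Icc 0 1) → DilationEq A ρ ω C Ψ →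
        Set.EqOn Ψ F (Set.Icc 0 1)) ∧
      (fun K : ℕ => ⨆ x : Set.Icc (0:ℝ) 1,
          ‖(((ρ : ℂ) * ω) ^ K)⁻¹ • runSum A C K x - F x‖) =O[atTop]
        fun K => (lam / ρ) ^ K := by
  classical
  have hB0 : 0 < B := by omega
  have hBR : (0:ℝ) < B := Nat.cast_pos.mpr hB0
  have hμ : ‖(ρ:ℂ) * ω‖ = ρ := by
    rw [norm_mul, hω, mul_one, Complex.norm_real, Real.norm_eq_abs, abs_of_pos hρ]
  have hμ0 : (ρ:ℂ) * ω ≠ 0 := by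
    intro h; rw [h, norm_zero] at hμ; exact hρ.ne hμ
  have hμK : ∀ K : ℕ, ((ρ:ℂ) * ω) ^ K ≠ 0 := fun K => pow_ne_zero K hμ0
  set q : ℝ := lam / ρ with hqdef
  have hq0 : 0 < q := div_pos hlam hρ
  have hq1 : q < 1 := (div_lt_one hρ).mpr hlamρ
  have h1q : 0 < 1 - q := by linarith
  set G : ℕ → ℝ → Fin d → ℂ :=
    fun K x => ((((ρ:ℂ) * ω)) ^ K)⁻¹ • runSum A C K x with hGdef
  have hnormsmul : ∀ (K : ℕ) (v : Fin d → ℂ),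
      ‖((((ρ:ℂ) * ω)) ^ K)⁻¹ • v‖ = (ρ ^ K)⁻¹ * ‖v‖ := by
    intro K v; rw [norm_smul, norm_inv, norm_pow, hμ]
  have hrs1 : ∀ K, runSum A C K 1 = (((ρ:ℂ) * ω)) ^ K • C := fun K => by
    rw [rs_runSum_one hB0, rs_sum_wordProd A C hC]
  have hG1 : ∀ K, G K 1 = C := fun K => by
    rw [hGdef]; simp only; rw [hrs1, inv_smul_smul₀ (hμK K)]
  -- uniform bound on G
  have hGbd : ∀ K x, ‖G K x‖ ≤ ((B:ℝ) * q) ^ K * ‖C‖ := by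
    intro K x
    rw [hGdef]; simp only; rw [hnormsmul]
    have h1 : ‖runSum A C K x‖ ≤ (B:ℝ) ^ K * (lam ^ K * ‖C‖) := by
      rw [runSum]
      refine le_trans (norm_sum_le _ _) ?_
      calc ∑ w : Fin K → Fin B, ‖if wordVal w ≤ x then (wordProd A w).mulVec C else 0‖
          ≤ ∑ _w : Fin K → Fin B, lam ^ K * ‖C‖ := by
            refine Finset.sum_le_sum fun w _ => ?_
            split_ifs with h
            · exact rs_norm_wordProd_mulVec hA hlam.le w
            · rw [norm_zero]; positivity
        _ = (B:ℝ) ^ K * (lam ^ K * ‖C‖) := by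
            rw [Finset.sum_const, Finset.card_univ, nsmul_eq_mul]
            congr 1
            rw [Fintype.card_fun, Fintype.card_fin, Fintype.card_fin]
            push_cast
            ring
    calc (ρ ^ K)⁻¹ * ‖runSum A C K x‖
        ≤ (ρ ^ K)⁻¹ * ((B:ℝ) ^ K * (lam ^ K * ‖C‖)) :=
          mul_le_mul_of_nonneg_left h1 (by positivity)
      _ = ((B:ℝ) * q) ^ K * ‖C‖ := by
          rw [hqdef, mul_pow, div_pow, div_eq_mul_inv]
          ring
  -- digit extraction
  have hdigit : ∀ x : ℝ, 0 ≤ x → x < 1 →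
      ∃ r : Fin B, (r:ℝ)/B ≤ x ∧ x < ((r:ℝ)+1)/B := by
    intro x hx0 hx1
    have h0 : (0:ℝ) ≤ B * x := by positivity
    have h1 : (B:ℝ) * x < B := by nlinarith
    have hn0 : 0 ≤ ⌊(B:ℝ) * x⌋ := Int.floor_nonneg.mpr h0
    have hnB : ⌊(B:ℝ) * x⌋ < (B:ℤ) := Int.floor_lt.mpr (by exact_mod_cast h1)
    have hnlt : ⌊(B:ℝ) * x⌋.toNat < B := by omega
    have hcast : ((⌊(B:ℝ) * x⌋.toNat : ℕ) : ℝ) = ((⌊(B:ℝ) * x⌋ : ℤ) : ℝ) := by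
      exact_mod_cast Int.toNat_of_nonneg hn0
    refine ⟨⟨⌊(B:ℝ) * x⌋.toNat, hnlt⟩, ?_, ?_⟩
    · show ((⌊(B:ℝ) * x⌋.toNat : ℕ) : ℝ) / B ≤ x
      rw [div_le_iff₀ hBR, hcast]
      have := Int.floor_le ((B:ℝ) * x)
      linarith [mul_comm x (B:ℝ)]
    · show x < (((⌊(B:ℝ) * x⌋.toNat : ℕ) : ℝ) + 1) / B
      rw [lt_div_iff₀ hBR, hcast]
      have := Int.lt_floor_add_one ((B:ℝ) * x)
      linarith [mul_comm x (B:ℝ)]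
  have hyIcc : ∀ (r : Fin B) (x : ℝ), (r:ℝ)/B ≤ x → x < ((r:ℝ)+1)/B →
      0 ≤ B * x - r ∧ B * x - r ≤ 1 := by
    intro r x h1 h2
    rw [div_le_iff₀ hBR] at h1
    rw [lt_div_iff₀ hBR] at h2
    constructor <;> nlinarith [mul_comm x (B:ℝ)]
  -- the recursion for G
  have hGrec : ∀ (K : ℕ) (r : Fin B) (x : ℝ), (r:ℝ)/B ≤ x → x < ((r:ℝ)+1)/B →
      G (K+1) x = (((ρ:ℂ) * ω))⁻¹ •
        ((∑ s ∈ Finset.univ.filter fun s : Fin B => s < r, (A s).mulVec C)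
          + (A r).mulVec (G K (B * x - r))) := by
    intro K r x hx1 hx2
    rw [hGdef]; simp only
    rw [rs_runSum_succ hB0 A C K r hx1 hx2, hrs1]
    have h2 : ∀ s : Fin B, (A s).mulVec ((((ρ:ℂ) * ω)) ^ K • C)
        = (((ρ:ℂ) * ω)) ^ K • (A s).mulVec C := fun s => Matrix.mulVec_smul _ _ _
    simp only [h2]
    rw [← Finset.smul_sum]
    have h3 : (A r).mulVec (runSum A C K (B * x - r))
        = (((ρ:ℂ) * ω)) ^ K • (A r).mulVec
            (((((ρ:ℂ) * ω)) ^ K)⁻¹ • runSum A C K (B * x - r)) := by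
      rw [Matrix.mulVec_smul, smul_inv_smul₀ (hμK K)]
    rw [h3, ← smul_add, smul_smul]
    congr 1
    rw [pow_succ, mul_inv]
    field_simp
  -- geometric bound for successive differences
  set c : ℝ := (1 + (B:ℝ) * q) * ‖C‖ with hcdef
  have hc0 : 0 ≤ c := by positivity
  have hGdiff : ∀ (K : ℕ) (x : ℝ), 0 ≤ x → x ≤ 1 →
      ‖G (K+1) x - G K x‖ ≤ c * q ^ K := by
    intro K
    induction K with
    | zero =>
      intro x hx0 hx1
      calc ‖G 1 x - G 0 x‖ ≤ ‖G 1 x‖ + ‖G 0 x‖ := norm_sub_le _ _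
        _ ≤ ((B:ℝ) * q) ^ 1 * ‖C‖ + ((B:ℝ) * q) ^ 0 * ‖C‖ :=
            add_le_add (hGbd 1 x) (hGbd 0 x)
        _ = c * q ^ 0 := by rw [hcdef]; ring
    | succ K ih =>
      intro x hx0 hx1
      rcases eq_or_lt_of_le hx1 with h1 | h1
      · rw [h1, hG1, hG1, sub_self, norm_zero]; positivity
      · obtain ⟨r, hr1, hr2⟩ := hdigit x hx0 h1
        obtain ⟨hy0, hy1⟩ := hyIcc r x hr1 hr2
        rw [hGrec (K+1) r x hr1 hr2, hGrec K r x hr1 hr2, ← smul_sub,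
          add_sub_add_left_eq_sub, ← Matrix.mulVec_sub, norm_smul, norm_inv, hμ]
        calc ρ⁻¹ * ‖(A r).mulVec (G (K+1) (B*x-r) - G K (B*x-r))‖
            ≤ ρ⁻¹ * (lam * (c * q ^ K)) := by
              refine mul_le_mul_of_nonneg_left ?_ (by positivity)
              refine le_trans (Matrix.linfty_opNorm_mulVec _ _) ?_
              exact mul_le_mul (hA r) (ih _ hy0 hy1) (norm_nonneg _) hlam.le
          _ = c * q ^ (K+1) := by rw [hqdef]; ring
  -- Cauchy sequences and the limit F
  have hcau : ∀ x : ℝ, 0 ≤ x → x ≤ 1 → CauchySeq (fun K => G K x) := by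
    intro x hx0 hx1
    refine cauchySeq_of_le_geometric q c hq1 fun n => ?_
    rw [dist_eq_norm, norm_sub_rev]
    exact hGdiff n x hx0 hx1
  set F : ℝ → Fin d → ℂ := fun x => limUnder atTop (fun K => G K x) with hFdef
  have hFtend : ∀ x : ℝ, 0 ≤ x → x ≤ 1 →
      Tendsto (fun K => G K x) atTop (𝓝 (F x)) :=
    fun x hx0 hx1 => (hcau x hx0 hx1).tendsto_limUnder
  have hFdist : ∀ (K : ℕ) (x : ℝ), 0 ≤ x → x ≤ 1 →
      ‖G K x - F x‖ ≤ c * q ^ K / (1 - q) := by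
    intro K x hx0 hx1
    rw [← dist_eq_norm]
    exact dist_le_of_le_geometric_of_tendsto q c hq1
      (fun n => by rw [dist_eq_norm, norm_sub_rev]; exact hGdiff n x hx0 hx1)
      (hFtend x hx0 hx1) K
  have hF1 : F 1 = C :=
    tendsto_nhds_unique (hFtend 1 zero_le_one le_rfl)
      (by simp only [hG1]; exact tendsto_const_nhds)
  have hF0 : F 0 = 0 := by
    refine tendsto_nhds_unique (hFtend 0 le_rfl zero_le_one) ?_
    have hbd : ∀ K : ℕ, ‖G K 0‖ ≤ ‖C‖ * q ^ K := by
      intro K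
      have hrneg : runSum A C K (-(((B:ℝ)^K)⁻¹)) = 0 :=
        rs_runSum_neg A C K (neg_neg_of_pos (by positivity))
      have hosc := rs_runSum_osc (C := C) (x := (0:ℝ)) (y := -(((B:ℝ)^K)⁻¹)) hB0 hA hlam.le K
        (neg_nonpos.mpr (by positivity)) (by rw [neg_add_cancel])
      rw [hrneg, sub_zero] at hosc
      rw [hGdef]; simp only; rw [hnormsmul]
      calc (ρ ^ K)⁻¹ * ‖runSum A C K 0‖ ≤ (ρ ^ K)⁻¹ * (lam ^ K * ‖C‖) :=
            mul_le_mul_of_nonneg_left hosc (by positivity)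
        _ = ‖C‖ * q ^ K := by rw [hqdef, div_pow]; field_simp
    refine squeeze_zero_norm hbd ?_
    have := (tendsto_pow_atTop_nhds_zero_of_lt_one hq0.le hq1).const_mul ‖C‖
    simpa using this
  have hcontmul : ∀ r : Fin B, Continuous fun v : Fin d → ℂ => (A r).mulVec v := by
    intro r
    have := (Matrix.mulVecLin (A r)).continuous_of_finiteDimensional
    exact this
  -- F satisfies the recursion
  have hFrec : ∀ (r : Fin B) (x : ℝ), (r:ℝ)/B ≤ x → x < ((r:ℝ)+1)/B →
      F x = (((ρ:ℂ) * ω))⁻¹ •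
        ((∑ s ∈ Finset.univ.filter fun s : Fin B => s < r, (A s).mulVec C)
          + (A r).mulVec (F (B * x - r))) := by
    intro r x hx1 hx2
    have hx0 : 0 ≤ x := le_trans (by positivity) hx1
    have hxlt1 : x < 1 := by
      refine lt_of_lt_of_le hx2 ?_
      rw [div_le_one hBR]
      have := r.isLt
      exact_mod_cast this
    obtain ⟨hy0, hy1⟩ := hyIcc r x hx1 hx2
    have ht1 : Tendsto (fun K => G (K+1) x) atTop (𝓝 (F x)) :=
      (hFtend x hx0 hxlt1.le).comp (tendsto_add_atTop_nat 1)
    have ht1' : Tendsto (fun K => (((ρ:ℂ) * ω))⁻¹ •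
        ((∑ s ∈ Finset.univ.filter fun s : Fin B => s < r, (A s).mulVec C)
          + (A r).mulVec (G K (B * x - r)))) atTop (𝓝 (F x)) :=
      ht1.congr fun K => hGrec K r x hx1 hx2
    have ht2 : Tendsto (fun K => (((ρ:ℂ) * ω))⁻¹ •
        ((∑ s ∈ Finset.univ.filter fun s : Fin B => s < r, (A s).mulVec C)
          + (A r).mulVec (G K (B * x - r)))) atTop
        (𝓝 ((((ρ:ℂ) * ω))⁻¹ •
          ((∑ s ∈ Finset.univ.filter fun s : Fin B => s < r, (A s).mulVec C)
            + (A r).mulVec (F (B * x - r))))) := by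
      refine Tendsto.const_smul ?_ _
      refine Tendsto.const_add _ ?_
      exact ((hcontmul r).tendsto _).comp (hFtend _ hy0 hy1)
    exact tendsto_nhds_unique ht1' ht2
  have hFeq : DilationEq A ρ ω C F := ⟨hF0, hF1, hFrec⟩
  -- continuity of F on [0,1]
  have hFcont : ContinuousOn F (Set.Icc 0 1) := by
    set c₂ : ℝ := 2 * (c / (1 - q)) + ‖C‖ with hc2
    have hc20 : 0 ≤ c₂ := by positivity
    have hosc : ∀ (K : ℕ) (x' y' : ℝ), 0 ≤ y' → y' ≤ x' → x' ≤ 1 →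
        x' ≤ y' + ((B:ℝ)^K)⁻¹ → ‖F x' - F y'‖ ≤ c₂ * q ^ K := by
      intro K x' y' hy0 hyx hx1 hxy
      have hx0 : 0 ≤ x' := hy0.trans hyx
      have hy1 : y' ≤ 1 := hyx.trans hx1
      have h1 := hFdist K x' hx0 hx1
      have h2 := hFdist K y' hy0 hy1
      have h3 : ‖G K x' - G K y'‖ ≤ ‖C‖ * q ^ K := by
        rw [hGdef]; simp only; rw [← smul_sub, hnormsmul]
        have hoo := rs_runSum_osc (C := C) hB0 hA hlam.le K hyx hxy
        calc (ρ ^ K)⁻¹ * ‖runSum A C K x' - runSum A C K y'‖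
            ≤ (ρ ^ K)⁻¹ * (lam ^ K * ‖C‖) :=
              mul_le_mul_of_nonneg_left hoo (by positivity)
          _ = ‖C‖ * q ^ K := by rw [hqdef, div_pow]; field_simp
      calc ‖F x' - F y'‖
          = ‖(F x' - G K x') + ((G K x' - G K y') + (G K y' - F y'))‖ := by
            congr 1; ring
        _ ≤ ‖F x' - G K x'‖ + (‖G K x' - G K y'‖ + ‖G K y' - F y'‖) :=
            le_trans (norm_add_le _ _) (by gcongr; exact norm_add_le _ _)
        _ ≤ c * q ^ K / (1-q) + (‖C‖ * q ^ K + c * q ^ K / (1-q)) :=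
            add_le_add (by rw [norm_sub_rev]; exact h1) (add_le_add h3 h2)
        _ = c₂ * q ^ K := by rw [hc2]; ring
    rw [Metric.continuousOn_iff]
    intro x hx ε hε
    have htend : Tendsto (fun K : ℕ => c₂ * q ^ K) atTop (𝓝 0) := by
      have := (tendsto_pow_atTop_nhds_zero_of_lt_one hq0.le hq1).const_mul c₂
      simpa using this
    obtain ⟨K, hK⟩ := (htend.eventually (gt_mem_nhds hε)).exists
    refine ⟨((B:ℝ)^K)⁻¹, by positivity, fun y hy hdxy => ?_⟩
    rw [Real.dist_eq, abs_sub_lt_iff] at hdxy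
    rw [dist_eq_norm]
    rcases le_total y x with h | h
    · calc ‖F y - F x‖ = ‖F x - F y‖ := norm_sub_rev _ _
        _ ≤ c₂ * q ^ K := hosc K x y hy.1 h hx.2 (by linarith [hdxy.2])
        _ < ε := hK
    · calc ‖F y - F x‖ ≤ c₂ * q ^ K := hosc K y x hx.1 h hy.2 (by linarith [hdxy.1])
        _ < ε := hK
  -- uniqueness
  have huniq : ∀ Ψ : ℝ → Fin d → ℂ, ContinuousOn Ψ (Set.Icc 0 1) →
      DilationEq A ρ ω C Ψ → Set.EqOn Ψ F (Set.Icc 0 1) := by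
    intro Ψ hΨc hΨe
    obtain ⟨hΨ0, hΨ1, hΨr⟩ := hΨe
    have hgc : ContinuousOn (fun x => ‖Ψ x - F x‖) (Set.Icc 0 1) :=
      (hΨc.sub hFcont).norm
    obtain ⟨x₀, hx₀, hmax⟩ :=
      isCompact_Icc.exists_isMaxOn (Set.nonempty_Icc.mpr zero_le_one) hgc
    have hmax' : ∀ x ∈ Set.Icc (0:ℝ) 1, ‖Ψ x - F x‖ ≤ ‖Ψ x₀ - F x₀‖ :=
      fun x hxm => hmax hxm
    have hM0 : 0 ≤ ‖Ψ x₀ - F x₀‖ := norm_nonneg _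
    have hclaim : ∀ x ∈ Set.Icc (0:ℝ) 1, ‖Ψ x - F x‖ ≤ q * ‖Ψ x₀ - F x₀‖ := by
      intro x hxm
      rcases eq_or_lt_of_le hxm.2 with h1 | h1
      · rw [h1, hΨ1, hF1, sub_self, norm_zero]; positivity
      · obtain ⟨r, hr1, hr2⟩ := hdigit x hxm.1 h1
        obtain ⟨hy0, hy1⟩ := hyIcc r x hr1 hr2
        have hsub : Ψ x - F x = (((ρ:ℂ) * ω))⁻¹ •
            ((A r).mulVec (Ψ (B*x-r) - F (B*x-r))) := by
          rw [hΨr r x hr1 hr2, hFrec r x hr1 hr2, ← smul_sub,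
            add_sub_add_left_eq_sub, Matrix.mulVec_sub]
        rw [hsub, norm_smul, norm_inv, hμ]
        calc ρ⁻¹ * ‖(A r).mulVec (Ψ (B*x-r) - F (B*x-r))‖
            ≤ ρ⁻¹ * (lam * ‖Ψ x₀ - F x₀‖) := by
              refine mul_le_mul_of_nonneg_left ?_ (by positivity)
              refine le_trans (Matrix.linfty_opNorm_mulVec _ _) ?_
              exact mul_le_mul (hA r) (hmax' _ ⟨hy0, hy1⟩) (norm_nonneg _) hlam.le
          _ = q * ‖Ψ x₀ - F x₀‖ := by rw [hqdef]; ring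
    have hM_le : ‖Ψ x₀ - F x₀‖ ≤ q * ‖Ψ x₀ - F x₀‖ := hclaim x₀ hx₀
    have hM_eq : ‖Ψ x₀ - F x₀‖ = 0 := by nlinarith
    intro x hxm
    have h := hclaim x hxm
    rw [hM_eq, mul_zero] at h
    have h0 : ‖Ψ x - F x‖ = 0 := le_antisymm h (norm_nonneg _)
    exact sub_eq_zero.mp (norm_eq_zero.mp h0)
  -- conclusion
  refine ⟨F, hFcont, hFeq, huniq, ?_⟩
  haveI : Nonempty (Set.Icc (0:ℝ) 1) := ⟨⟨0, le_rfl, zero_le_one⟩⟩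
  refine IsBigO.of_bound (c / (1-q)) ?_
  filter_upwards with K
  have hsup : (⨆ x : Set.Icc (0:ℝ) 1, ‖(((ρ:ℂ) * ω) ^ K)⁻¹ • runSum A C K x - F x‖)
      ≤ c * q ^ K / (1-q) := by
    refine ciSup_le fun x => ?_
    exact hFdist K x x.2.1 x.2.2
  have hnon : 0 ≤ ⨆ x : Set.Icc (0:ℝ) 1,
      ‖(((ρ:ℂ) * ω) ^ K)⁻¹ • runSum A C K x - F x‖ :=
    Real.iSup_nonneg fun x => norm_nonneg _
  rw [Real.norm_eq_abs, Real.norm_eq_abs, abs_of_nonneg hnon,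
    abs_of_nonneg (by positivity : (0:ℝ) ≤ (lam/ρ)^K)]
  calc (⨆ x : Set.Icc (0:ℝ) 1, ‖(((ρ:ℂ) * ω) ^ K)⁻¹ • runSum A C K x - F x‖)
      ≤ c * q ^ K / (1-q) := hsup
    _ = c / (1-q) * (lam/ρ) ^ K := by rw [hqdef]; ring
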